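/- Let T_1, T_2, T_3, T_4 be four pairwise edge-disjoint trees on the same vertex set V with |V| ≥ 10, such that no vertex is a leaf in more than one of the four trees (if a vertex has degree 1 in T_i, it has degree at least 2 in each T_j with j ≠ i). Let v_j ∈ V be an arbitrary vertex. Then there exist three pairwise vertex-disjoint edges e_1 ∈ T_1, e_2 ∈ T_2, e_3 ∈ T_3, none of which is incident to v_j. -/

import Mathlib

set_option linter.unusedSectionVars false
set_option maxHeartbeats 1000000
open Finset SimpleGraph

namespace RainbowAux

variable {V : Type*} [Fintype V] [DecidableEq V]

/-- In a path, an edge containing the initial vertex joins it to the second vertex. -/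
lemma start_edge_eq {G : SimpleGraph V} {u v w x : V} (h : G.Adj u w) (q : G.Walk w v)
    (hp : (SimpleGraph.Walk.cons h q).IsPath) (hx : s(u, x) ∈ (SimpleGraph.Walk.cons h q).edges) :
    x = w := by
  rw [SimpleGraph.Walk.edges_cons, List.mem_cons] at hx
  rcases hx with hx | hx
  · rw [Sym2.eq_iff] at hx
    rcases hx with ⟨-, h2⟩ | ⟨h1, h2⟩
    · exact h2
    · exact absurd h1 h.ne
  · have hu : u ∈ q.support := SimpleGraph.Walk.fst_mem_support_of_mem_edges q hx
    rw [SimpleGraph.Walk.cons_isPath_iff] at hp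
    exact absurd hu hp.2

/-- Every nonempty acyclic graph has a pendant vertex. -/
lemma exists_pendant (G : SimpleGraph V) (hac : G.IsAcyclic) (hne : G.edgeSet.Nonempty) :
    ∃ a w : V, G.Adj a w ∧ ∀ c : V, G.Adj a c → c = w := by
  classical
  obtain ⟨e, he⟩ := hne
  induction e using Sym2.ind with
  | _ a0 b0 =>
  rw [SimpleGraph.mem_edgeSet] at he
  set P : ℕ → Prop := fun n => ∃ (u v : V) (p : G.Walk u v), p.IsPath ∧ p.length = n with hP
  have h1 : P 1 := by
    refine ⟨a0, b0, SimpleGraph.Walk.cons he SimpleGraph.Walk.nil, ?_, rfl⟩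
    simp [he.ne]
  haveI : Nonempty V := ⟨a0⟩
  have hb : 1 ≤ Fintype.card V := Fintype.card_pos
  set N : ℕ := Nat.findGreatest P (Fintype.card V) with hN
  have hPN : P N := Nat.findGreatest_spec hb h1
  have hN1 : 1 ≤ N := Nat.le_findGreatest hb h1
  have hmax : ∀ (u v : V) (q : G.Walk u v), q.IsPath → q.length ≤ N := by
    intro u v q hq
    by_contra hlen
    push_neg at hlen
    exact Nat.findGreatest_is_greatest hlen (le_of_lt hq.length_lt) ⟨u, v, q, hq, rfl⟩
  obtain ⟨u, v, p, hp, hlen⟩ := hPN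
  cases p with
  | nil => simp at hlen; omega
  | cons hadj q =>
    rename_i b
    refine ⟨u, b, hadj, ?_⟩
    intro c hc
    by_contra hcb
    by_cases hcs : c ∈ (SimpleGraph.Walk.cons hadj q).support
    · -- c on the path: path uniqueness gives contradiction
      have hq' : ((SimpleGraph.Walk.cons hadj q).takeUntil c hcs).IsPath := hp.takeUntil hcs
      have hr : (SimpleGraph.Walk.cons hc SimpleGraph.Walk.nil).IsPath := by simp [hc.ne]
      have := hac.path_unique ⟨(SimpleGraph.Walk.cons hadj q).takeUntil c hcs, hq'⟩
        ⟨SimpleGraph.Walk.cons hc SimpleGraph.Walk.nil, hr⟩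
      have heq : ((SimpleGraph.Walk.cons hadj q).takeUntil c hcs) =
          SimpleGraph.Walk.cons hc SimpleGraph.Walk.nil := congrArg Subtype.val this
      have hmem : s(u, c) ∈ ((SimpleGraph.Walk.cons hadj q).takeUntil c hcs).edges := by
        rw [heq]; simp
      have hmem' : s(u, c) ∈ (SimpleGraph.Walk.cons hadj q).edges :=
        SimpleGraph.Walk.edges_takeUntil_subset _ hcs hmem
      exact hcb (start_edge_eq hadj q hp hmem')
    · -- extend the path: contradiction with maximality
      have hext : (SimpleGraph.Walk.cons hc.symm (SimpleGraph.Walk.cons hadj q)).IsPath := by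
        rw [SimpleGraph.Walk.cons_isPath_iff]
        exact ⟨hp, hcs⟩
      have := hmax c v _ hext
      simp only [SimpleGraph.Walk.length_cons] at this hlen
      omega


lemma acyclic_mono {G H : SimpleGraph V} (hle : H ≤ G) (hac : G.IsAcyclic) : H.IsAcyclic :=
  fun _v c hc => hac (c.mapLe hle) ((SimpleGraph.Walk.mapLe_isCycle hle).mpr hc)

/-- König-type dichotomy for acyclic graphs: either a matching with `k+1` edges,
or a vertex cover with at most `k` vertices. -/
lemma konig : ∀ (m : ℕ) (G : SimpleGraph V), G.IsAcyclic → G.edgeSet.ncard ≤ m → ∀ k : ℕ,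
    (∃ p : Fin (k + 1) → V × V, (∀ a, G.Adj (p a).1 (p a).2) ∧
      (∀ a b, a ≠ b → (p a).1 ≠ (p b).1 ∧ (p a).1 ≠ (p b).2 ∧
        (p a).2 ≠ (p b).1 ∧ (p a).2 ≠ (p b).2)) ∨
    (∃ C : Finset V, C.card ≤ k ∧ ∀ x y : V, G.Adj x y → x ∈ C ∨ y ∈ C) := by
  intro m
  induction m with
  | zero =>
    intro G hac hm k
    right
    refine ⟨∅, by simp, fun x y hxy => ?_⟩
    have : s(x, y) ∈ G.edgeSet := (SimpleGraph.mem_edgeSet G).mpr hxy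
    have h0 : G.edgeSet.ncard = 0 := Nat.le_zero.mp hm
    rw [Set.ncard_eq_zero (Set.toFinite _)] at h0
    rw [h0] at this
    exact absurd this (Set.notMem_empty _)
  | succ m ih =>
    intro G hac hm k
    by_cases hne : G.edgeSet.Nonempty
    · cases k with
      | zero =>
        left
        obtain ⟨e, he⟩ := hne
        induction e using Sym2.ind with
        | _ a b =>
        rw [SimpleGraph.mem_edgeSet] at he
        exact ⟨fun _ => (a, b), fun _ => he, fun i j hij =>
          absurd (Fin.ext (show i.val = j.val by omega)) hij⟩
      | succ k =>
        obtain ⟨a, w, haw, huniq⟩ := exists_pendant G hac hne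
        -- delete all edges at w
        set G' : SimpleGraph V :=
          { Adj := fun x y => G.Adj x y ∧ x ≠ w ∧ y ≠ w
            symm := ⟨fun x y ⟨h1, h2, h3⟩ => ⟨h1.symm, h3, h2⟩⟩
            loopless := ⟨fun x ⟨h1, _, _⟩ => G.loopless.irrefl x h1⟩ } with hG'
        have hG'le : G' ≤ G := fun x y h => h.1
        have hG'adj : ∀ x y : V, G'.Adj x y ↔ (G.Adj x y ∧ x ≠ w ∧ y ≠ w) := fun x y => Iff.rfl
        have hsub : G'.edgeSet ⊂ G.edgeSet := by
          constructor
          · exact SimpleGraph.edgeSet_mono hG'le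
          · intro hcon
            have : s(a, w) ∈ G.edgeSet := (SimpleGraph.mem_edgeSet G).mpr haw
            have h2 := hcon this
            rw [SimpleGraph.mem_edgeSet, hG'adj] at h2
            exact h2.2.2 rfl
        have hcard : G'.edgeSet.ncard ≤ m := by
          have := Set.ncard_lt_ncard hsub (Set.toFinite _)
          omega
        have hac' : G'.IsAcyclic := acyclic_mono hG'le hac
        rcases ih G' hac' hcard k with ⟨p, hpadj, hpdisj⟩ | ⟨C, hC, hcov⟩
        · -- extend matching with (a, w)
          left
          have hpadj' : ∀ i, G.Adj (p i).1 (p i).2 ∧ (p i).1 ≠ w ∧ (p i).2 ≠ w :=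
            fun i => (hG'adj _ _).mp (hpadj i)
          have hwfree : ∀ i, (p i).1 ≠ w ∧ (p i).2 ≠ w := fun i => (hpadj' i).2
          have hafree : ∀ i, (p i).1 ≠ a ∧ (p i).2 ≠ a := by
            intro i
            constructor
            · intro hcon
              have h2 := (hpadj' i).1
              rw [hcon] at h2
              exact (hwfree i).2 (huniq _ h2)
            · intro hcon
              have h2 := ((hpadj' i).1).symm
              rw [hcon] at h2
              exact (hwfree i).1 (huniq _ h2)
          refine ⟨Fin.cons (a, w) (fun i => p i), ?_, ?_⟩
          · intro i
            rcases Fin.eq_zero_or_eq_succ i with rfl | ⟨i', rfl⟩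
            · simpa using haw
            · simpa using (hpadj' i').1
          · intro i j hij
            rcases Fin.eq_zero_or_eq_succ i with rfl | ⟨i', rfl⟩ <;>
              rcases Fin.eq_zero_or_eq_succ j with rfl | ⟨j', rfl⟩
            · exact absurd rfl hij
            · simp only [Fin.cons_zero, Fin.cons_succ]
              exact ⟨((hafree j').1).symm, ((hafree j').2).symm,
                ((hwfree j').1).symm, ((hwfree j').2).symm⟩
            · simp only [Fin.cons_zero, Fin.cons_succ]
              exact ⟨(hafree i').1, (hwfree i').1, (hafree i').2, (hwfree i').2⟩
            · simp only [Fin.cons_succ]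
              refine hpdisj i' j' (fun hcon => hij ?_)
              rw [hcon]
        · -- extend cover with w
          right
          refine ⟨insert w C, ?_, ?_⟩
          · calc (insert w C).card ≤ C.card + 1 := Finset.card_insert_le _ _
              _ ≤ k + 1 := by omega
          · intro x y hxy
            by_cases hxw : x = w
            · left; rw [hxw]; exact Finset.mem_insert_self _ _
            · by_cases hyw : y = w
              · right; rw [hyw]; exact Finset.mem_insert_self _ _
              · have : G'.Adj x y := ⟨hxy, hxw, hyw⟩
                rcases hcov x y this with h | h
                · left; exact Finset.mem_insert_of_mem h
                · right; exact Finset.mem_insert_of_mem h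
    · right
      refine ⟨∅, by simp, fun x y hxy => ?_⟩
      exact absurd ⟨s(x, y), (SimpleGraph.mem_edgeSet G).mpr hxy⟩ hne


lemma exists_nbr (G : SimpleGraph V) (hG : G.IsTree) (h2 : 2 ≤ Fintype.card V) (v : V) :
    ∃ w, G.Adj v w := by
  obtain ⟨w, hw⟩ := Fintype.exists_ne_of_one_lt_card (by omega) v
  obtain ⟨p⟩ := hG.isConnected.preconnected v w
  have hnil : ¬p.Nil := SimpleGraph.Walk.not_nil_of_ne (Ne.symm hw)
  exact ⟨p.getVert 1, SimpleGraph.Walk.adj_snd hnil⟩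

lemma degree_ge_one (G : SimpleGraph V) [DecidableRel G.Adj] (hG : G.IsTree)
    (h2 : 2 ≤ Fintype.card V) (v : V) : 1 ≤ G.degree v := by
  obtain ⟨w, hw⟩ := exists_nbr G hG h2 v
  exact (G.degree_pos_iff_exists_adj v).mpr ⟨w, hw⟩

lemma sum_degree_compl_le (G : SimpleGraph V) [DecidableRel G.Adj] (X : Finset V)
    (hcov : ∀ x y : V, G.Adj x y → x ∈ X ∨ y ∈ X) :
    ∑ v ∈ Xᶜ, G.degree v ≤ G.edgeFinset.card := by
  have hdeg : ∀ v : V, G.degree v = (G.edgeFinset.filter (fun e => v ∈ e)).card := by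
    intro v
    rw [← SimpleGraph.card_incidenceFinset_eq_degree, SimpleGraph.incidenceFinset_eq_filter]
  calc ∑ v ∈ Xᶜ, G.degree v
      = ∑ v ∈ Xᶜ, (G.edgeFinset.filter (fun e => v ∈ e)).card := by
        exact Finset.sum_congr rfl (fun v _ => hdeg v)
    _ = ∑ e ∈ G.edgeFinset, (Xᶜ.filter (fun v => v ∈ e)).card := by
        simp_rw [Finset.card_filter]
        exact Finset.sum_comm
    _ ≤ ∑ _e ∈ G.edgeFinset, 1 := by
        refine Finset.sum_le_sum (fun e he => ?_)
        rw [Finset.card_le_one]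
        induction e using Sym2.ind with
        | _ a b =>
        have hadj : G.Adj a b := by rwa [SimpleGraph.mem_edgeFinset, SimpleGraph.mem_edgeSet] at he
        intro u hu v hv
        simp only [Finset.mem_filter, Finset.mem_compl, Sym2.mem_iff] at hu hv
        rcases hcov a b hadj with hX | hX
        · rcases hu.2 with rfl | rfl
          · exact absurd hX hu.1
          · rcases hv.2 with rfl | rfl
            · exact absurd hX hv.1
            · rfl
        · rcases hu.2 with rfl | rfl
          · rcases hv.2 with rfl | rfl
            · rfl
            · exact absurd hX hv.1
          · exact absurd hX hu.1
    _ = G.edgeFinset.card := by simp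

lemma cover_leaves (G : SimpleGraph V) [DecidableRel G.Adj] (hG : G.IsTree)
    (h2 : 2 ≤ Fintype.card V) (X : Finset V)
    (hcov : ∀ x y : V, G.Adj x y → x ∈ X ∨ y ∈ X) :
    Fintype.card V + 1 ≤ 2 * X.card + ((univ.filter fun v => G.degree v = 1) \ X).card := by
  have hE : G.edgeFinset.card + 1 = Fintype.card V := hG.card_edgeFinset
  have hsum := sum_degree_compl_le G X hcov
  have hsplit := Finset.sum_filter_add_sum_filter_not Xᶜ (fun v => G.degree v = 1)
    (fun v => G.degree v)
  have hlf : ∑ v ∈ Xᶜ.filter (fun v => G.degree v = 1), G.degree v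
      = (Xᶜ.filter (fun v => G.degree v = 1)).card := by
    rw [Finset.card_eq_sum_ones]
    exact Finset.sum_congr rfl (fun v hv => (Finset.mem_filter.mp hv).2)
  have hnl : 2 * (Xᶜ.filter (fun v => ¬G.degree v = 1)).card
      ≤ ∑ v ∈ Xᶜ.filter (fun v => ¬G.degree v = 1), G.degree v := by
    have hb : ∀ v ∈ Xᶜ.filter (fun v => ¬G.degree v = 1), 2 ≤ G.degree v := by
      intro v hv
      have h1 := degree_ge_one G hG h2 v
      have hne1 : ¬G.degree v = 1 := (Finset.mem_filter.mp hv).2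
      omega
    have h2s := Finset.card_nsmul_le_sum (Xᶜ.filter (fun v => ¬G.degree v = 1))
      (fun v => G.degree v) 2 hb
    simpa [smul_eq_mul, mul_comm] using h2s
  have key : (Xᶜ.filter (fun v => G.degree v = 1)).card
      + 2 * (Xᶜ.filter (fun v => ¬G.degree v = 1)).card ≤ G.edgeFinset.card := by
    calc (Xᶜ.filter (fun v => G.degree v = 1)).card
        + 2 * (Xᶜ.filter (fun v => ¬G.degree v = 1)).card
        ≤ ∑ v ∈ Xᶜ.filter (fun v => G.degree v = 1), G.degree v
          + ∑ v ∈ Xᶜ.filter (fun v => ¬G.degree v = 1), G.degree v :=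
          Nat.add_le_add (le_of_eq hlf.symm) hnl
      _ = ∑ v ∈ Xᶜ, G.degree v := hsplit
      _ ≤ G.edgeFinset.card := hsum
  have hcards := Finset.card_filter_add_card_filter_not
    (s := Xᶜ) (p := fun v => G.degree v = 1)
  have hcompl : Xᶜ.card = Fintype.card V - X.card := Finset.card_compl X
  have hXle : X.card ≤ Fintype.card V := Finset.card_le_univ X
  have hset : (univ.filter fun v => G.degree v = 1) \ X = Xᶜ.filter (fun v => G.degree v = 1) := by
    ext v
    simp only [Finset.mem_sdiff, Finset.mem_filter, Finset.mem_univ, true_and,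
      Finset.mem_compl]
    tauto
  rw [hset]
  omega

lemma two_leaves (G : SimpleGraph V) [DecidableRel G.Adj] (hG : G.IsTree)
    (h2 : 2 ≤ Fintype.card V) :
    2 ≤ ((univ : Finset V).filter fun v => G.degree v = 1).card := by
  have hE : G.edgeFinset.card + 1 = Fintype.card V := hG.card_edgeFinset
  have hsum : ∑ v, G.degree v = 2 * G.edgeFinset.card :=
    SimpleGraph.sum_degrees_eq_twice_card_edges G
  have hsplit := Finset.sum_filter_add_sum_filter_not (univ : Finset V)
    (fun v => G.degree v = 1) (fun v => G.degree v)
  have hlf : ∑ v ∈ (univ : Finset V).filter (fun v => G.degree v = 1), G.degree v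
      = ((univ : Finset V).filter (fun v => G.degree v = 1)).card := by
    rw [Finset.card_eq_sum_ones]
    exact Finset.sum_congr rfl (fun v hv => (Finset.mem_filter.mp hv).2)
  have hnl : 2 * ((univ : Finset V).filter (fun v => ¬G.degree v = 1)).card
      ≤ ∑ v ∈ (univ : Finset V).filter (fun v => ¬G.degree v = 1), G.degree v := by
    have hb : ∀ v ∈ (univ : Finset V).filter (fun v => ¬G.degree v = 1), 2 ≤ G.degree v := by
      intro v hv
      have h1 := degree_ge_one G hG h2 v
      have hne1 : ¬G.degree v = 1 := (Finset.mem_filter.mp hv).2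
      omega
    have h2s := Finset.card_nsmul_le_sum ((univ : Finset V).filter (fun v => ¬G.degree v = 1))
      (fun v => G.degree v) 2 hb
    simpa [smul_eq_mul, mul_comm] using h2s
  have hcards := Finset.card_filter_add_card_filter_not
    (s := (univ : Finset V)) (p := fun v => G.degree v = 1)
  have huniv : (univ : Finset V).card = Fintype.card V := Finset.card_univ
  have key : ((univ : Finset V).filter (fun v => G.degree v = 1)).card
      + 2 * ((univ : Finset V).filter (fun v => ¬G.degree v = 1)).card
      ≤ 2 * G.edgeFinset.card := by
    calc ((univ : Finset V).filter (fun v => G.degree v = 1)).card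
        + 2 * ((univ : Finset V).filter (fun v => ¬G.degree v = 1)).card
        ≤ ∑ v ∈ (univ : Finset V).filter (fun v => G.degree v = 1), G.degree v
          + ∑ v ∈ (univ : Finset V).filter (fun v => ¬G.degree v = 1), G.degree v :=
          Nat.add_le_add (le_of_eq hlf.symm) hnl
      _ = ∑ v, G.degree v := hsplit
      _ = 2 * G.edgeFinset.card := hsum
  omega


section Perms

variable {W : Type*} {v a b c d e f : W}

lemma nodup_swap12 (h : [v,a,b,c,d,e,f].Nodup) : [v,c,d,a,b,e,f].Nodup := by
  have h1 : List.Perm (([c,d] ++ [a,b] : List W)) ([a,b] ++ [c,d]) := List.perm_append_comm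
  have hp : List.Perm (([v] ++ (([c,d] ++ [a,b]) ++ [e,f]) : List W))
      ([v] ++ (([a,b] ++ [c,d]) ++ [e,f])) := ((h1.append_right [e,f]).append_left [v])
  simpa using hp.symm.nodup (by simpa using h)

lemma nodup_rotl (h : [v,a,b,c,d,e,f].Nodup) : [v,c,d,e,f,a,b].Nodup := by
  have h1 : List.Perm (([c,d,e,f] ++ [a,b] : List W)) ([a,b] ++ [c,d,e,f]) :=
    List.perm_append_comm
  have hp : List.Perm (([v] ++ ([c,d,e,f] ++ [a,b]) : List W))
      ([v] ++ ([a,b] ++ [c,d,e,f])) := h1.append_left [v]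
  simpa using hp.symm.nodup (by simpa using h)

lemma nodup_swap23 (h : [v,a,b,c,d,e,f].Nodup) : [v,a,b,e,f,c,d].Nodup := by
  have h1 : List.Perm (([e,f] ++ [c,d] : List W)) ([c,d] ++ [e,f]) := List.perm_append_comm
  have hp : List.Perm (([v,a,b] ++ ([e,f] ++ [c,d]) : List W))
      ([v,a,b] ++ ([c,d] ++ [e,f])) := h1.append_left [v,a,b]
  simpa using hp.symm.nodup (by simpa using h)

lemma nodup_rotr (h : [v,a,b,c,d,e,f].Nodup) : [v,e,f,a,b,c,d].Nodup := by
  have h1 : List.Perm (([e,f] ++ [a,b,c,d] : List W)) ([a,b,c,d] ++ [e,f]) :=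
    List.perm_append_comm
  have hp : List.Perm (([v] ++ ([e,f] ++ [a,b,c,d]) : List W))
      ([v] ++ ([a,b,c,d] ++ [e,f])) := h1.append_left [v]
  simpa using hp.symm.nodup (by simpa using h)

lemma nodup_rev (h : [v,a,b,c,d,e,f].Nodup) : [v,e,f,c,d,a,b].Nodup :=
  nodup_swap23 (nodup_rotr h)

end Perms

end RainbowAux

open RainbowAux

/-- Given four pairwise edge-disjoint trees on a vertex set of size at least 10 with no
common leaves, and an arbitrary vertex `vj`, there are three pairwise vertex-disjoint edges,
one from each of the first three trees, none incident to `vj` (a rainbow matching of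
size 3 in the first three colors avoiding `vj`). -/
theorem rainbow_matching_of_four_trees {V : Type*} [Fintype V]
    (T : Fin 4 → SimpleGraph V) (htree : ∀ i, (T i).IsTree)
    (hdisj : ∀ i j, i ≠ j → Disjoint (T i).edgeSet (T j).edgeSet)
    (hleaves : ∀ (v : V) (i j : Fin 4), i ≠ j →
      ((T i).neighborSet v).ncard = 1 → 2 ≤ ((T j).neighborSet v).ncard)
    (hcard : 10 ≤ Fintype.card V) (vj : V) :
    ∃ a₁ b₁ a₂ b₂ a₃ b₃ : V,
      (T 0).Adj a₁ b₁ ∧ (T 1).Adj a₂ b₂ ∧ (T 2).Adj a₃ b₃ ∧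
      ([vj, a₁, b₁, a₂, b₂, a₃, b₃] : List V).Nodup := by
  classical
  have h2 : 2 ≤ Fintype.card V := by omega
  -- leaf sets
  set L : Fin 4 → Finset V := fun i => univ.filter fun v => (T i).degree v = 1 with hL
  have hncard : ∀ (i : Fin 4) (v : V), ((T i).neighborSet v).ncard = (T i).degree v := by
    intro i v
    have hset : (T i).neighborSet v = (((T i).neighborFinset v : Finset V) : Set V) := by
      ext w; simp
    rw [show ((T i).neighborSet v).ncard = ((T i).neighborFinset v).card from
      (congrArg Set.ncard hset).trans (Set.ncard_coe_finset _)]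
    rfl
  have hLdisj : ∀ i j : Fin 4, i ≠ j → Disjoint (L i) (L j) := by
    intro i j hij
    rw [Finset.disjoint_left]
    intro v hvi hvj
    rw [hL] at hvi hvj
    simp only [Finset.mem_filter] at hvi hvj
    have h1 : ((T i).neighborSet v).ncard = 1 := by rw [hncard]; exact hvi.2
    have hge := hleaves v i j hij h1
    rw [hncard, hvj.2] at hge
    omega
  have htwoL : ∀ i : Fin 4, 2 ≤ (L i).card := fun i => two_leaves (T i) (htree i) h2
  have hsum4 : ∑ j : Fin 4, (L j).card ≤ Fintype.card V := by
    rw [← Finset.card_biUnion (fun x _ y _ hxy => hLdisj x y hxy)]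
    exact Finset.card_le_univ _
  have hbud : ∀ i : Fin 4, (L i).card + 6 ≤ Fintype.card V := by
    intro i
    have hsplit : ∑ j : Fin 4, (L j).card = (L i).card + ∑ j ∈ univ.erase i, (L j).card :=
      (Finset.add_sum_erase univ (fun j => (L j).card) (mem_univ i)).symm
    have herase : 6 ≤ ∑ j ∈ univ.erase i, (L j).card := by
      have hb : ∀ j ∈ univ.erase i, 2 ≤ (L j).card := fun j _ => htwoL j
      have hns := Finset.card_nsmul_le_sum (univ.erase i) (fun j => (L j).card) 2 hb
      have hcarde : (univ.erase i).card = 3 := by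
        rw [Finset.card_erase_of_mem (mem_univ i)]
        simp
      rw [hcarde] at hns
      simpa [smul_eq_mul] using hns
    omega
  -- an edge avoiding any three vertices
  have hG3 : ∀ (i : Fin 4) (x y z : V), ∃ a b : V, (T i).Adj a b ∧
      a ≠ x ∧ a ≠ y ∧ a ≠ z ∧ b ≠ x ∧ b ≠ y ∧ b ≠ z := by
    intro i x y z
    by_contra hcon
    push_neg at hcon
    have hcov : ∀ a b : V, (T i).Adj a b →
        a ∈ ({x, y, z} : Finset V) ∨ b ∈ ({x, y, z} : Finset V) := by
      intro a b hab
      by_contra hc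
      rw [not_or] at hc
      obtain ⟨hca, hcb⟩ := hc
      simp only [Finset.mem_insert, Finset.mem_singleton, not_or] at hca hcb
      exact hcb.2.2 (hcon a b hab hca.1 hca.2.1 hca.2.2 hcb.1 hcb.2.1)
    have hcl := cover_leaves (T i) (htree i) h2 {x, y, z} hcov
    have hX3 : ({x, y, z} : Finset V).card ≤ 3 := by
      refine le_trans (Finset.card_insert_le _ _) (Nat.succ_le_succ ?_)
      refine le_trans (Finset.card_insert_le _ _) (Nat.succ_le_succ ?_)
      simp
    have hsd : ((univ.filter fun v => (T i).degree v = 1) \ {x, y, z}).card ≤ (L i).card := by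
      have heq : (univ.filter fun v => (T i).degree v = 1) = L i := rfl
      rw [heq]
      exact Finset.card_le_card (Finset.sdiff_subset)
    have := hbud i
    omega
  -- a 4-matching avoiding vj in some of the first three trees
  have hK : ∀ i : Fin 4,
      (∃ p : Fin 4 → V × V,
        (∀ a, (T i).Adj (p a).1 (p a).2 ∧ (p a).1 ≠ vj ∧ (p a).2 ≠ vj) ∧
        (∀ a b, a ≠ b → (p a).1 ≠ (p b).1 ∧ (p a).1 ≠ (p b).2 ∧
          (p a).2 ≠ (p b).1 ∧ (p a).2 ≠ (p b).2)) ∨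
      (Fintype.card V + 1 ≤ 8 + (L i).card) := by
    intro i
    set G' : SimpleGraph V :=
      { Adj := fun x y => (T i).Adj x y ∧ x ≠ vj ∧ y ≠ vj
        symm := ⟨fun x y ⟨ha, hb, hc⟩ => ⟨ha.symm, hc, hb⟩⟩
        loopless := ⟨fun x ⟨ha, _, _⟩ => (T i).loopless.irrefl x ha⟩ } with hG'
    have hG'adj : ∀ x y : V, G'.Adj x y ↔ ((T i).Adj x y ∧ x ≠ vj ∧ y ≠ vj) :=
      fun x y => Iff.rfl
    have hle : G' ≤ T i := fun x y h => h.1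
    have hac : G'.IsAcyclic := acyclic_mono hle (htree i).IsAcyclic
    rcases konig (G'.edgeSet.ncard) G' hac le_rfl 3 with ⟨p, hpadj, hdisjp⟩ | ⟨C, hC, hcov⟩
    · left
      exact ⟨p, fun a => (hG'adj _ _).mp (hpadj a), hdisjp⟩
    · right
      have hcov' : ∀ x y : V, (T i).Adj x y → x ∈ insert vj C ∨ y ∈ insert vj C := by
        intro x y hxy
        by_cases hx : x = vj
        · left; rw [hx]; exact Finset.mem_insert_self _ _
        by_cases hy : y = vj
        · right; rw [hy]; exact Finset.mem_insert_self _ _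
        rcases hcov x y ((hG'adj x y).mpr ⟨hxy, hx, hy⟩) with h | h
        · left; exact Finset.mem_insert_of_mem h
        · right; exact Finset.mem_insert_of_mem h
      have hcl := cover_leaves (T i) (htree i) h2 (insert vj C) hcov'
      have hC4 : (insert vj C).card ≤ 4 := le_trans (Finset.card_insert_le _ _) (by omega)
      have hsd : ((univ.filter fun v => (T i).degree v = 1) \ insert vj C).card
          ≤ (L i).card := by
        have heq : (univ.filter fun v => (T i).degree v = 1) = L i := rfl
        rw [heq]
        exact Finset.card_le_card (Finset.sdiff_subset)
      omega
  have hsome : ∃ i0 : Fin 4, (i0 = 0 ∨ i0 = 1 ∨ i0 = 2) ∧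
      (∃ p : Fin 4 → V × V,
        (∀ a, (T i0).Adj (p a).1 (p a).2 ∧ (p a).1 ≠ vj ∧ (p a).2 ≠ vj) ∧
        (∀ a b, a ≠ b → (p a).1 ≠ (p b).1 ∧ (p a).1 ≠ (p b).2 ∧
          (p a).2 ≠ (p b).1 ∧ (p a).2 ≠ (p b).2)) := by
    rcases hK 0 with h0 | h0
    · exact ⟨0, Or.inl rfl, h0⟩
    rcases hK 1 with h1 | h1
    · exact ⟨1, Or.inr (Or.inl rfl), h1⟩
    rcases hK 2 with hh2 | hh2
    · exact ⟨2, Or.inr (Or.inr rfl), hh2⟩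
    exfalso
    have hb3 := htwoL 3
    have hexp : ∑ j : Fin 4, (L j).card
        = (L 0).card + (L 1).card + (L 2).card + (L 3).card := by
      rw [Fin.sum_univ_four]
    omega
  obtain ⟨i0, hi0cases, p, hp, hpd⟩ := hsome
  -- dichotomy: one of the two other trees has an edge avoiding vj with an endpoint
  -- outside the matching
  have hEDGE : ∀ j j' : Fin 4, j ≠ j' →
      (∃ x y : V, (T j).Adj x y ∧ x ≠ vj ∧ y ≠ vj ∧
        ∀ k : Fin 4, x ≠ (p k).1 ∧ x ≠ (p k).2) ∨
      (∃ x y : V, (T j').Adj x y ∧ x ≠ vj ∧ y ≠ vj ∧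
        ∀ k : Fin 4, x ≠ (p k).1 ∧ x ≠ (p k).2) := by
    intro j j' hjj
    by_contra hcon
    rw [not_or] at hcon
    obtain ⟨hnj, hnj'⟩ := hcon
    set S : Finset V := {vj, (p 0).1, (p 0).2, (p 1).1, (p 1).2, (p 2).1, (p 2).2,
      (p 3).1, (p 3).2} with hS
    have hScard : S.card ≤ 9 := by
      refine le_trans (Finset.card_insert_le _ _) (Nat.succ_le_succ ?_)
      refine le_trans (Finset.card_insert_le _ _) (Nat.succ_le_succ ?_)
      refine le_trans (Finset.card_insert_le _ _) (Nat.succ_le_succ ?_)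
      refine le_trans (Finset.card_insert_le _ _) (Nat.succ_le_succ ?_)
      refine le_trans (Finset.card_insert_le _ _) (Nat.succ_le_succ ?_)
      refine le_trans (Finset.card_insert_le _ _) (Nat.succ_le_succ ?_)
      refine le_trans (Finset.card_insert_le _ _) (Nat.succ_le_succ ?_)
      refine le_trans (Finset.card_insert_le _ _) (Nat.succ_le_succ ?_)
      simp
    obtain ⟨z, hzS⟩ : ∃ z : V, z ∉ S := by
      by_contra hc
      push_neg at hc
      have hsub : (univ : Finset V) ⊆ S := fun z _ => hc z
      have := Finset.card_le_card hsub
      rw [Finset.card_univ] at this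
      omega
    have hzv : z ≠ vj := by
      intro h
      apply hzS
      rw [hS, h]
      exact Finset.mem_insert_self _ _
    have hzout : ∀ k : Fin 4, z ≠ (p k).1 ∧ z ≠ (p k).2 := by
      intro k
      constructor <;> intro h <;> apply hzS <;> rw [hS, h] <;> fin_cases k <;> simp
    have hone : ∀ jj : Fin 4,
        (¬∃ x y : V, (T jj).Adj x y ∧ x ≠ vj ∧ y ≠ vj ∧
          ∀ k : Fin 4, x ≠ (p k).1 ∧ x ≠ (p k).2) →
        (T jj).neighborSet z = {vj} := by
      intro jj hn
      ext w
      simp only [SimpleGraph.mem_neighborSet, Set.mem_singleton_iff]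
      constructor
      · intro hzw
        by_contra hwv
        exact hn ⟨z, w, hzw, hzv, hwv, hzout⟩
      · intro h
        rw [h]
        obtain ⟨w0, hw0⟩ := exists_nbr (T jj) (htree jj) h2 z
        by_cases hw0v : w0 = vj
        · rwa [hw0v] at hw0
        · exact absurd ⟨z, w0, hw0, hzv, hw0v, hzout⟩ hn
    have hone1 := hone j hnj
    have hone2 := hone j' hnj'
    have hge := hleaves z j j' hjj (by rw [hone1]; exact Set.ncard_singleton vj)
    rw [hone2, Set.ncard_singleton] at hge
    omega
  -- core construction
  have CORE : ∀ j j' : Fin 4, j ≠ j' →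
      (∃ x y : V, (T j).Adj x y ∧ x ≠ vj ∧ y ≠ vj ∧
        ∀ k : Fin 4, x ≠ (p k).1 ∧ x ≠ (p k).2) →
      ∃ m1 m2 x y s t : V, (T i0).Adj m1 m2 ∧ (T j).Adj x y ∧ (T j').Adj s t ∧
        ([vj, m1, m2, x, y, s, t] : List V).Nodup := by
    intro j j' hjj hexx
    obtain ⟨x, y, hxy, hxv, hyv, hxout⟩ := hexx
    obtain ⟨s, t, hst, hsv, hsx, hsy, htv, htx, hty⟩ := hG3 j' vj x y
    have hsurv : ∃ k : Fin 4, y ≠ (p k).1 ∧ y ≠ (p k).2 ∧ s ≠ (p k).1 ∧ s ≠ (p k).2 ∧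
        t ≠ (p k).1 ∧ t ≠ (p k).2 := by
      by_contra hcon
      push_neg at hcon
      have hhit : ∀ k : Fin 4, (y = (p k).1 ∨ y = (p k).2) ∨ (s = (p k).1 ∨ s = (p k).2) ∨
          (t = (p k).1 ∨ t = (p k).2) := by
        intro k
        by_contra hc2
        push_neg at hc2
        have hck := hcon k
        tauto
      have hmem : ∀ k : Fin 4,
          (if y = (p k).1 ∨ y = (p k).2 then y else
            if s = (p k).1 ∨ s = (p k).2 then s else t) ∈ ({y, s, t} : Finset V) := by
        intro k
        split_ifs <;> simp
      set f : Fin 4 → ({y, s, t} : Finset V) := fun k =>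
        ⟨if y = (p k).1 ∨ y = (p k).2 then y else
            if s = (p k).1 ∨ s = (p k).2 then s else t, hmem k⟩ with hf
      have hprop : ∀ k : Fin 4, ((f k : V) = (p k).1 ∨ (f k : V) = (p k).2) := by
        intro k
        rw [hf]
        simp only []
        split_ifs with hh1 hh2
        · exact hh1
        · exact hh2
        · have := hhit k
          tauto
      have hcards : Fintype.card ({y, s, t} : Finset V) < Fintype.card (Fin 4) := by
        rw [Fintype.card_coe, Fintype.card_fin]
        have hle3 : ({y, s, t} : Finset V).card ≤ 3 := by
          refine le_trans (Finset.card_insert_le _ _) (Nat.succ_le_succ ?_)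
          refine le_trans (Finset.card_insert_le _ _) (Nat.succ_le_succ ?_)
          simp
        omega
      obtain ⟨k, l, hkl, hfeq⟩ := Fintype.exists_ne_map_eq_of_card_lt f hcards
      have hkprop := hprop k
      have hlprop := hprop l
      rw [hfeq] at hkprop
      obtain ⟨d1, d2, d3, d4⟩ := hpd k l hkl
      rcases hkprop with hk | hk <;> rcases hlprop with hl | hl
      · exact d1 (by rw [← hk, ← hl])
      · exact d2 (by rw [← hk, ← hl])
      · exact d3 (by rw [← hk, ← hl])
      · exact d4 (by rw [← hk, ← hl])
    obtain ⟨k, hky1, hky2, hks1, hks2, hkt1, hkt2⟩ := hsurv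
    have hm := hp k
    have hxk := hxout k
    refine ⟨(p k).1, (p k).2, x, y, s, t, hm.1, hxy, hst, ?_⟩
    simp only [List.nodup_cons, List.mem_cons, List.mem_singleton, List.not_mem_nil,
      or_false, not_or, List.nodup_nil, and_true, not_false_eq_true]
    exact ⟨⟨(hm.2.1).symm, (hm.2.2).symm, hxv.symm, hyv.symm, hsv.symm, htv.symm⟩,
      ⟨hm.1.ne, (hxk.1).symm, hky1.symm, hks1.symm, hkt1.symm⟩,
      ⟨(hxk.2).symm, hky2.symm, hks2.symm, hkt2.symm⟩,
      ⟨hxy.ne, hsx.symm, htx.symm⟩, ⟨hsy.symm, hty.symm⟩, hst.ne⟩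
  -- final assembly
  rcases hi0cases with hi0 | hi0 | hi0 <;> subst hi0
  · rcases hEDGE 1 2 (by decide) with hE | hE
    · obtain ⟨m1, m2, x, y, s, t, hm, he1, he2, hnd⟩ := CORE 1 2 (by decide) hE
      exact ⟨m1, m2, x, y, s, t, hm, he1, he2, hnd⟩
    · obtain ⟨m1, m2, x, y, s, t, hm, he1, he2, hnd⟩ := CORE 2 1 (by decide) hE
      exact ⟨m1, m2, s, t, x, y, hm, he2, he1, nodup_swap23 hnd⟩
  · rcases hEDGE 0 2 (by decide) with hE | hE
    · obtain ⟨m1, m2, x, y, s, t, hm, he1, he2, hnd⟩ := CORE 0 2 (by decide) hE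
      exact ⟨x, y, m1, m2, s, t, he1, hm, he2, nodup_swap12 hnd⟩
    · obtain ⟨m1, m2, x, y, s, t, hm, he1, he2, hnd⟩ := CORE 2 0 (by decide) hE
      exact ⟨s, t, m1, m2, x, y, he2, hm, he1, nodup_rotr hnd⟩
  · rcases hEDGE 0 1 (by decide) with hE | hE
    · obtain ⟨m1, m2, x, y, s, t, hm, he1, he2, hnd⟩ := CORE 0 1 (by decide) hE
      exact ⟨x, y, s, t, m1, m2, he1, he2, hm, nodup_rotl hnd⟩
    · obtain ⟨m1, m2, x, y, s, t, hm, he1, he2, hnd⟩ := CORE 1 0 (by decide) hE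
      exact ⟨s, t, x, y, m1, m2, he2, he1, hm, nodup_rev hnd⟩
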